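/- Let (f_k)_{k≥1} be functions from ℝ to the closed complex unit disc (characteristic functions), and τ_n → ∞ with τ_{n+1}/τ_n → 1. Suppose for a fixed t there is c < 1 and n₀ such that (1/n) Σ_{k=1}^n |f_k(t)|² ≤ c for all n > n₀. Then (1/ln τ_n) Σ_{k=1}^n (1 - |f_k(t)|²) → ∞ as n → ∞. -/

import Mathlib

open Filter

/-- Condition B₂ implies Condition B: if `|f_k(t)| ≤ 1`, `τ_n → ∞`, `τ_{n+1}/τ_n → 1`
and the averages `(1/n) Σ |f_k(t)|²` stay below some `c < 1`, then
`(1/ln τ_n) Σ_{k=1}^n (1 - |f_k(t)|²) → ∞`. -/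
theorem condition_B2_implies_B
    (f : ℕ → ℝ → ℂ) (hf : ∀ k t, ‖f k t‖ ≤ 1)
    (τ : ℕ → ℝ) (hpos : ∀ n, 0 < τ n)
    (hinf : Tendsto τ atTop atTop)
    (hratio : Tendsto (fun n => τ (n + 1) / τ n) atTop (nhds 1))
    (t : ℝ) (c : ℝ) (hc : c < 1) (n₀ : ℕ)
    (havg : ∀ n, n₀ < n → (1 / (n : ℝ)) * ∑ k ∈ Finset.Icc 1 n, ‖f k t‖ ^ 2 ≤ c) :
    Tendsto (fun n => (1 / Real.log (τ n)) *
        ∑ k ∈ Finset.Icc 1 n, (1 - ‖f k t‖ ^ 2)) atTop atTop := by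
  set a : ℕ → ℝ := fun n => Real.log (τ n) with ha
  -- log of ratio tends to 0
  have hdiff : Tendsto (fun n => a (n + 1) - a n) atTop (nhds 0) := by
    have h := (Real.continuousAt_log (by norm_num : (1:ℝ) ≠ 0)).tendsto.comp hratio
    simp only [Real.log_one] at h
    refine h.congr fun n => ?_
    simp [ha, Real.log_div (ne_of_gt (hpos _)) (ne_of_gt (hpos _))]
  have hces : Tendsto (fun n : ℕ => (n⁻¹ : ℝ) * ∑ i ∈ Finset.range n, (a (i + 1) - a i))
      atTop (nhds 0) := hdiff.cesaro
  have hlogn : Tendsto (fun n : ℕ => a n / n) atTop (nhds 0) := by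
    have h0 : Tendsto (fun n : ℕ => a 0 / n) atTop (nhds 0) :=
      tendsto_const_nhds.div_atTop tendsto_natCast_atTop_atTop
    have := hces.add h0
    rw [add_zero] at this
    refine this.congr' ?_
    filter_upwards [eventually_gt_atTop 0] with n hn
    rw [Finset.sum_range_sub]
    have : (n : ℝ) ≠ 0 := Nat.cast_ne_zero.2 hn.ne'
    field_simp
    ring
  -- eventually a n > 0
  have hapos : ∀ᶠ n in atTop, 0 < a n := by
    filter_upwards [hinf.eventually_gt_atTop 1] with n hn
    exact Real.log_pos hn
  have hna : Tendsto (fun n : ℕ => (a n / n)⁻¹) atTop atTop := by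
    apply Filter.Tendsto.inv_tendsto_nhdsGT_zero
    rw [tendsto_nhdsWithin_iff]
    refine ⟨hlogn, ?_⟩
    filter_upwards [hapos, eventually_gt_atTop 0] with n h1 h2
    exact div_pos h1 (Nat.cast_pos.2 h2)
  have h1c : (0:ℝ) < 1 - c := by linarith
  have hmain : Tendsto (fun n : ℕ => (1 - c) * (a n / n)⁻¹) atTop atTop :=
    hna.const_mul_atTop h1c
  refine tendsto_atTop_mono' atTop ?_ hmain
  filter_upwards [hapos, eventually_gt_atTop n₀, eventually_gt_atTop 0] with n h1 hn0 hnpos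
  have hnR : (0:ℝ) < n := Nat.cast_pos.2 hnpos
  -- sum bound
  have hsum : ∑ k ∈ Finset.Icc 1 n, ‖f k t‖ ^ 2 ≤ c * n := by
    have := havg n hn0
    rw [one_div, inv_mul_le_iff₀ hnR] at this
    linarith [this]
  have hS : (1 - c) * n ≤ ∑ k ∈ Finset.Icc 1 n, (1 - ‖f k t‖ ^ 2) := by
    rw [Finset.sum_sub_distrib, Finset.sum_const, Nat.card_Icc]
    simp only [Nat.add_sub_cancel, nsmul_eq_mul, mul_one]
    nlinarith [hsum]
  calc (1 - c) * (a n / n)⁻¹ = (1 / a n) * ((1 - c) * n) := by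
        rw [div_eq_mul_inv, mul_inv, inv_inv]; ring
    _ ≤ (1 / a n) * ∑ k ∈ Finset.Icc 1 n, (1 - ‖f k t‖ ^ 2) := by
        apply mul_le_mul_of_nonneg_left hS
        positivity
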